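/- There is no odd perfect number of the form n = 5^α · 3^(2b) · q₁^(6k₁+2) · ... · q_t^(6k_t+2), where α, b are positive integers, k₁, ..., k_t are nonnegative integers, 5 < q₁ < ... < q_t are primes, and at least one of the primes q₁, ..., q_t is good. -/

import Mathlib

/-- Φ₃(x) = x² + x + 1, the third cyclotomic polynomial evaluated at x. -/
def Phi3 (x : ℕ) : ℕ := x ^ 2 + x + 1

/-- Σ, the set of primes congruent to 2 or 4 mod 7. -/
def SigmaSet : Set ℕ := {p | p.Prime ∧ (p % 7 = 2 ∨ p % 7 = 4)}

/-- T(x), the set of primes q ≠ 3 dividing Φ₃(x). -/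
def T (x : ℕ) : Set ℕ := {q | q.Prime ∧ q ≠ 3 ∧ q ∣ Phi3 x}

/-- The recursively defined sets S_n(p). -/
def S (p : ℕ) : ℕ → Set ℕ
  | 0 => {p}
  | n + 1 => S p n ∪ ⋃ x ∈ S p n, T x

/-- A prime p > 7 is good if S_n(p) ∩ Σ is nonempty for some n. -/
def IsGood (p : ℕ) : Prop := p.Prime ∧ 7 < p ∧ ∃ n : ℕ, (S p n ∩ SigmaSet).Nonempty

open Finset ArithmeticFunction

lemma phi3_modEq (m x : ℕ) : Phi3 (x % m) ≡ Phi3 x [MOD m] := by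
  have h : x % m ≡ x [MOD m] := Nat.mod_modEq x m
  exact ((h.pow 2).add h).add_right 1

lemma phi3_odd (x : ℕ) : ¬ 2 ∣ Phi3 x := by
  have h2 : Phi3 x = x * (x + 1) + 1 := by unfold Phi3; ring
  obtain ⟨c, hc⟩ := Nat.even_mul_succ_self x
  rw [h2, hc]
  omega

lemma phi3_not_five (x : ℕ) : ¬ 5 ∣ Phi3 x := by
  intro h
  have key : Phi3 (x % 5) % 5 = 0 := by
    have := (phi3_modEq 5 x)
    unfold Nat.ModEq at this
    rw [this]
    omega
  have hlt : x % 5 < 5 := Nat.mod_lt _ (by norm_num)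
  set r := x % 5 with hr
  interval_cases r <;> simp [Phi3] at key

lemma seven_dvd_phi3 (p : ℕ) (h : p % 7 = 2 ∨ p % 7 = 4) : 7 ∣ Phi3 p := by
  have key := phi3_modEq 7 p
  unfold Nat.ModEq at key
  rcases h with h | h <;> rw [h] at key <;> unfold Phi3 at key ⊢ <;> norm_num at key <;> omega

lemma phi3_dvd_geom (p k : ℕ) : Phi3 p ∣ ∑ i ∈ Finset.range (3 * k), p ^ i := by
  induction k with
  | zero => simp
  | succ k ih =>
    have h : 3 * (k + 1) = (3 * k) + 1 + 1 + 1 := by ring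
    rw [h, Finset.sum_range_succ, Finset.sum_range_succ, Finset.sum_range_succ]
    have hd : Phi3 p ∣ p ^ (3 * k) * Phi3 p := Dvd.intro_left _ rfl
    have := dvd_add ih hd
    convert this using 1
    · rfl
    unfold Phi3
    ring

lemma phi3_dvd_sigma (p k : ℕ) (hp : p.Prime) :
    Phi3 p ∣ ArithmeticFunction.sigma 1 (p ^ (6 * k + 2)) := by
  rw [ArithmeticFunction.sigma_one_apply_prime_pow hp]
  have h : 6 * k + 2 + 1 = 3 * (2 * k + 1) := by ring
  rw [h]
  exact phi3_dvd_geom p (2 * k + 1)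

lemma sigma_mul_ge (d m : ℕ) (hd : d ≠ 0) (hm : 0 < m) :
    ArithmeticFunction.sigma 1 d * m ≤ ArithmeticFunction.sigma 1 (d * m) := by
  rw [ArithmeticFunction.sigma_one_apply, ArithmeticFunction.sigma_one_apply, Finset.sum_mul]
  calc ∑ e ∈ Nat.divisors d, e * m
      = ∑ f ∈ (Nat.divisors d).image (· * m), f := by
        rw [Finset.sum_image]
        intro a _ b _ hab
        exact Nat.eq_of_mul_eq_mul_right hm hab
    _ ≤ ∑ f ∈ Nat.divisors (d * m), f := by
        apply Finset.sum_le_sum_of_subset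
        intro f hf
        simp only [Finset.mem_image, Nat.mem_divisors] at hf ⊢
        obtain ⟨e, ⟨hed, -⟩, rfl⟩ := hf
        exact ⟨mul_dvd_mul_right hed m, by positivity⟩

theorem no_odd_perfect_with_good_prime :
    ¬ ∃ (n α b t : ℕ) (q k : Fin t → ℕ),
      0 < α ∧ 0 < b ∧
      (∀ i, (q i).Prime) ∧ (∀ i, 5 < q i) ∧ StrictMono q ∧
      (∃ j, IsGood (q j)) ∧
      n = 5 ^ α * 3 ^ (2 * b) * ∏ i, q i ^ (6 * k i + 2) ∧
      Odd n ∧ Nat.Perfect n := by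
  rintro ⟨n, α, b, t, q, k, hα, hb, hq, hq5, hmono, ⟨j, hgood⟩, hn, hodd, hperf⟩
  have hn0 : 0 < n := hperf.2
  -- σ n = 2 n
  have hσ : ArithmeticFunction.sigma 1 n = 2 * n := by
    rw [ArithmeticFunction.sigma_one_apply]
    exact (Nat.perfect_iff_sum_divisors_eq_two_mul hn0).mp hperf
  -- classification of prime divisors of n
  have hclass : ∀ x : ℕ, x.Prime → x ∣ n → x ≠ 3 → x ≠ 5 → ∃ i, x = q i := by
    intro x hx hxn hx3 hx5
    rw [hn] at hxn
    rcases (Nat.Prime.dvd_mul hx).mp hxn with h | h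
    · rcases (Nat.Prime.dvd_mul hx).mp h with h' | h'
      · exact absurd ((Nat.prime_dvd_prime_iff_eq hx (by norm_num)).mp
          (hx.dvd_of_dvd_pow h')) hx5
      · exact absurd ((Nat.prime_dvd_prime_iff_eq hx (by norm_num)).mp
          (hx.dvd_of_dvd_pow h')) hx3
    · obtain ⟨i, -, hi⟩ := (hx.prime).exists_mem_finset_dvd h
      exact ⟨i, (Nat.prime_dvd_prime_iff_eq hx (hq i)).mp (hx.dvd_of_dvd_pow hi)⟩
  -- σ (q i ^ e i) divides σ n
  have hsigdvd : ∀ i : Fin t,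
      ArithmeticFunction.sigma 1 (q i ^ (6 * k i + 2)) ∣ ArithmeticFunction.sigma 1 n := by
    intro i
    set m := 5 ^ α * 3 ^ (2 * b) * ∏ l ∈ Finset.univ.erase i, q l ^ (6 * k l + 2) with hm
    have hnm : n = q i ^ (6 * k i + 2) * m := by
      rw [hn, hm, ← Finset.mul_prod_erase Finset.univ _ (Finset.mem_univ i)]
      ring
    have hcop : Nat.Coprime (q i ^ (6 * k i + 2)) m := by
      apply Nat.Coprime.pow_left
      rw [(hq i).coprime_iff_not_dvd]
      intro hdvd
      rcases ((hq i).dvd_mul).mp hdvd with h | h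
      · rcases ((hq i).dvd_mul).mp h with h' | h'
        · have := (Nat.prime_dvd_prime_iff_eq (hq i) (by norm_num)).mp
            ((hq i).dvd_of_dvd_pow h')
          have := hq5 i; omega
        · have := (Nat.prime_dvd_prime_iff_eq (hq i) (by norm_num)).mp
            ((hq i).dvd_of_dvd_pow h')
          have := hq5 i; omega
      · obtain ⟨l, hl, hldvd⟩ := ((hq i).prime).exists_mem_finset_dvd h
        have : q i = q l := (Nat.prime_dvd_prime_iff_eq (hq i) (hq l)).mp
          ((hq i).dvd_of_dvd_pow hldvd)
        have : i = l := hmono.injective this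
        rw [this] at hl
        exact (Finset.notMem_erase l Finset.univ) hl
    rw [hnm, ArithmeticFunction.isMultiplicative_sigma.map_mul_of_coprime hcop]
    exact dvd_mul_right _ _
  -- the chain invariant
  have hchain : ∀ N : ℕ, ∀ x ∈ S (q j) N, x.Prime ∧ x ∣ n ∧ x ≠ 3 ∧ x ≠ 5 := by
    intro N
    induction N with
    | zero =>
      intro x hx
      have hx' : x = q j := hx
      subst hx'
      refine ⟨hq j, ?_, by have := hq5 j; omega, by have := hq5 j; omega⟩
      have h1 : q j ∣ q j ^ (6 * k j + 2) := dvd_pow_self _ (by omega)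
      have h2 : q j ^ (6 * k j + 2) ∣ ∏ i, q i ^ (6 * k i + 2) :=
        Finset.dvd_prod_of_mem _ (Finset.mem_univ j)
      rw [hn]
      exact Dvd.dvd.mul_left (h1.trans h2) _
    | succ N ih =>
      intro x hx
      rcases hx with hx | hx
      · exact ih x hx
      · simp only [Set.mem_iUnion] at hx
        obtain ⟨y, hyS, hyT⟩ := hx
        obtain ⟨hyp, hyn, hy3, hy5⟩ := ih y hyS
        obtain ⟨hxp, hx3, hxphi⟩ := hyT
        obtain ⟨i, rfl⟩ := hclass y hyp hyn hy3 hy5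
        have hphidvd : Phi3 (q i) ∣ 2 * n := by
          calc Phi3 (q i) ∣ ArithmeticFunction.sigma 1 (q i ^ (6 * k i + 2)) :=
                phi3_dvd_sigma _ _ (hq i)
            _ ∣ ArithmeticFunction.sigma 1 n := hsigdvd i
            _ = 2 * n := hσ
        have hx2n : x ∣ 2 * n := hxphi.trans hphidvd
        have hx2 : x ≠ 2 := by
          rintro rfl
          exact phi3_odd _ hxphi
        have hxn : x ∣ n := by
          rcases (hxp.dvd_mul).mp hx2n with h | h
          · exact absurd ((Nat.prime_dvd_prime_iff_eq hxp (by norm_num)).mp h) hx2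
          · exact h
        have hx5 : x ≠ 5 := by
          rintro rfl
          exact phi3_not_five _ hxphi
        exact ⟨hxp, hxn, hx3, hx5⟩
  -- extract the Σ prime
  obtain ⟨-, -, N, p, hpS, hpp, hp7⟩ := hgood
  obtain ⟨hpprime, hpn, hp3, hp5⟩ := hchain N p hpS
  obtain ⟨i, rfl⟩ := hclass p hpprime hpn hp3 hp5
  -- 7 divides n
  have h7n : (7 : ℕ) ∣ n := by
    have h7 : (7 : ℕ) ∣ 2 * n := by
      calc (7 : ℕ) ∣ Phi3 (q i) := seven_dvd_phi3 _ hp7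
        _ ∣ ArithmeticFunction.sigma 1 (q i ^ (6 * k i + 2)) := phi3_dvd_sigma _ _ (hq i)
        _ ∣ ArithmeticFunction.sigma 1 n := hsigdvd i
        _ = 2 * n := hσ
    rcases ((by norm_num : Nat.Prime 7).dvd_mul).mp h7 with h | h
    · norm_num at h
    · exact h
  -- 49 divides n
  obtain ⟨i0, hi0⟩ := hclass 7 (by norm_num) h7n (by norm_num) (by norm_num)
  have h49 : (49 : ℕ) ∣ n := by
    have h1 : (7 : ℕ) ^ 2 ∣ q i0 ^ (6 * k i0 + 2) := by
      rw [← hi0]; exact pow_dvd_pow 7 (by omega)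
    have h2 : q i0 ^ (6 * k i0 + 2) ∣ ∏ l, q l ^ (6 * k l + 2) :=
      Finset.dvd_prod_of_mem _ (Finset.mem_univ i0)
    rw [hn]
    exact Dvd.dvd.mul_left ((by norm_num : (49:ℕ) = 7^2) ▸ (h1.trans h2)) _
  have h5 : (5 : ℕ) ∣ n := by
    rw [hn]
    exact Dvd.dvd.mul_right (Dvd.dvd.mul_right (dvd_pow_self 5 (by omega)) _) _
  have h9 : (9 : ℕ) ∣ n := by
    rw [hn]
    have : (9 : ℕ) = 3 ^ 2 := by norm_num
    rw [this]
    exact Dvd.dvd.mul_right (Dvd.dvd.mul_left (pow_dvd_pow 3 (by omega)) _) _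
  have h2205 : (2205 : ℕ) ∣ n := by
    have h45 : (45 : ℕ) ∣ n := Nat.Coprime.mul_dvd_of_dvd_of_dvd (by norm_num) h5 h9
    have := Nat.Coprime.mul_dvd_of_dvd_of_dvd (show Nat.Coprime 45 49 by norm_num) h45 h49
    exact (by norm_num : (45:ℕ) * 49 = 2205) ▸ this
  obtain ⟨m, hmn⟩ := h2205
  have hm0 : 0 < m := by
    rcases Nat.eq_zero_or_pos m with h | h
    · rw [h, mul_zero] at hmn; omega
    · exact h
  have hbound := sigma_mul_ge 2205 m (by norm_num) hm0
  have hs2205 : ArithmeticFunction.sigma 1 2205 = 4446 := by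
    rw [show (2205:ℕ) = 9 * (5 * 49) by norm_num,
      ArithmeticFunction.isMultiplicative_sigma.map_mul_of_coprime (by norm_num),
      ArithmeticFunction.isMultiplicative_sigma.map_mul_of_coprime (by norm_num),
      show (9:ℕ) = 3 ^ 2 by norm_num, show (49:ℕ) = 7 ^ 2 by norm_num,
      show (5:ℕ) = 5 ^ 1 by norm_num,
      ArithmeticFunction.sigma_one_apply_prime_pow (by norm_num),
      ArithmeticFunction.sigma_one_apply_prime_pow (by norm_num),
      ArithmeticFunction.sigma_one_apply_prime_pow (by norm_num)]
    decide
  rw [← hmn, hσ, hs2205, hmn] at hbound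
  omega
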